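/- Let F : ℝ → ℝ be continuous with F(p) = p for all p ∈ [0,1]. Then the function ψ : ℝ × [0,∞) → ℝ defined by ψ(x,t) := max{ x − t + 1, 0 } is a viscosity supersolution of ψ_t + F(ψ_x) = 0 in ℝ × (0,∞); that is, for every C² function φ and every point (x₀,t₀) ∈ ℝ × (0,∞) at which ψ − φ attains a local minimum, ∂_tφ(x₀,t₀) + F(∂_xφ(x₀,t₀)) ≥ 0. -/

import Mathlib

noncomputable section

/-- If `F : ℝ → ℝ` is continuous with `F(p) = p` for `p ∈ [0,1]`, then
`ψ(x,t) = max{x - t + 1, 0}` is a viscosity supersolution of `ψ_t + F(ψ_x) = 0` in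
`ℝ × (0,∞)`: for every `C²` test function `φ` and every point `(x₀,t₀)` with `t₀ > 0` at
which `ψ - φ` attains a local minimum, `∂_t φ(x₀,t₀) + F(∂_x φ(x₀,t₀)) ≥ 0`. -/
theorem statement18
    (F : ℝ → ℝ) (hF : Continuous F)
    (hF1 : ∀ p ∈ Set.Icc (0:ℝ) 1, F p = p)
    (ψ : ℝ × ℝ → ℝ) (hψ : ∀ x t : ℝ, ψ (x, t) = max (x - t + 1) 0) :
    ∀ φ : ℝ × ℝ → ℝ, ContDiff ℝ 2 φ →
      ∀ x₀ t₀ : ℝ, 0 < t₀ →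
        IsLocalMin (fun p => ψ p - φ p) (x₀, t₀) →
        0 ≤ deriv (fun τ => φ (x₀, τ)) t₀ + F (deriv (fun ξ => φ (ξ, t₀)) x₀) := by
  intro φ hφ x₀ t₀ ht₀ hmin
  have hdφ : Differentiable ℝ φ := hφ.differentiable (by norm_num)
  have hfd : HasFDerivAt φ (fderiv ℝ φ (x₀, t₀)) (x₀, t₀) := (hdφ (x₀, t₀)).hasFDerivAt
  set L := fderiv ℝ φ (x₀, t₀) with hLdef
  set a := L (1, 0) with hadef
  set b := L (0, 1) with hbdef
  -- partial derivatives
  have hx : HasDerivAt (fun ξ => φ (ξ, t₀)) a x₀ := by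
    have h1 : HasDerivAt (fun ξ : ℝ => (ξ, t₀)) ((1:ℝ), (0:ℝ)) x₀ :=
      (hasDerivAt_id x₀).prodMk (hasDerivAt_const x₀ t₀)
    exact hfd.comp_hasDerivAt x₀ h1
  have ht : HasDerivAt (fun τ => φ (x₀, τ)) b t₀ := by
    have h1 : HasDerivAt (fun τ : ℝ => (x₀, τ)) ((0:ℝ), (1:ℝ)) t₀ :=
      (hasDerivAt_const t₀ x₀).prodMk (hasDerivAt_id t₀)
    exact hfd.comp_hasDerivAt t₀ h1
  -- a + b = 0 : diagonal direction
  have hab : a + b = 0 := by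
    have h1 : HasDerivAt (fun s : ℝ => (x₀ - s, t₀ - s)) ((-1:ℝ), (-1:ℝ)) 0 :=
      ((hasDerivAt_id (0:ℝ)).const_sub x₀).prodMk ((hasDerivAt_id (0:ℝ)).const_sub t₀)
    have hfd0 : HasFDerivAt φ L (x₀ - 0, t₀ - 0) := by simpa using hfd
    have hdiag : HasDerivAt (fun s : ℝ => φ (x₀ - s, t₀ - s)) (L (-1, -1)) 0 :=
      hfd0.comp_hasDerivAt 0 h1
    have htend : Filter.Tendsto (fun s : ℝ => (x₀ - s, t₀ - s)) (nhds 0) (nhds (x₀, t₀)) := by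
      have : Continuous (fun s : ℝ => (x₀ - s, t₀ - s)) := by continuity
      simpa using this.tendsto 0
    have hev := htend.eventually hmin
    have hmax : IsLocalMax (fun s : ℝ => φ (x₀ - s, t₀ - s)) 0 := by
      refine hev.mono fun s hs => ?_
      simp only [hψ] at hs
      have he : x₀ - s - (t₀ - s) + 1 = x₀ - t₀ + 1 := by ring
      rw [he] at hs
      show φ (x₀ - s, t₀ - s) ≤ φ (x₀ - 0, t₀ - 0)
      simp only [sub_zero]
      linarith
    have hz : L (-1, -1) = 0 := hmax.hasDerivAt_eq_zero hdiag
    have hsum : ((-1:ℝ), (-1:ℝ)) = -((1:ℝ), (0:ℝ)) - ((0:ℝ), (1:ℝ)) := by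
      simp [Prod.ext_iff]
    rw [hsum, map_sub, map_neg] at hz
    rw [hadef, hbdef]; linarith
  -- eventual bound along x
  have htendx : Filter.Tendsto (fun ξ : ℝ => (ξ, t₀)) (nhds x₀) (nhds (x₀, t₀)) :=
    (continuous_id.prodMk continuous_const).tendsto x₀
  have hevx : ∀ᶠ ξ in nhds x₀,
      φ (ξ, t₀) - φ (x₀, t₀) ≤ max (ξ - t₀ + 1) 0 - max (x₀ - t₀ + 1) 0 := by
    refine (htendx.eventually hmin).mono fun ξ hs => ?_
    simp only [hψ] at hs
    linarith
  have hslope : Filter.Tendsto (slope (fun ξ => φ (ξ, t₀)) x₀) (nhdsWithin x₀ {x₀}ᶜ) (nhds a) :=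
    hasDerivAt_iff_tendsto_slope.mp hx
  -- a ≤ 1
  have ha1 : a ≤ 1 := by
    have hs1 : Filter.Tendsto (slope (fun ξ => φ (ξ, t₀)) x₀)
        (nhdsWithin x₀ (Set.Ioi x₀)) (nhds a) :=
      hslope.mono_left (nhdsWithin_mono x₀ (fun y hy => ne_of_gt hy))
    refine le_of_tendsto hs1 ?_
    have hmem : ∀ᶠ y in nhdsWithin x₀ (Set.Ioi x₀), y ∈ Set.Ioi x₀ :=
      eventually_mem_nhdsWithin
    have hb : ∀ᶠ y in nhdsWithin x₀ (Set.Ioi x₀),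
        φ (y, t₀) - φ (x₀, t₀) ≤ max (y - t₀ + 1) 0 - max (x₀ - t₀ + 1) 0 :=
      eventually_nhdsWithin_of_eventually_nhds hevx
    refine (hmem.and hb).mono fun y ⟨hy, hby⟩ => ?_
    have hy' : (0:ℝ) < y - x₀ := by simp at hy; linarith
    have h1 := le_max_left (x₀ - t₀ + 1) (0:ℝ)
    have h2 := le_max_right (x₀ - t₀ + 1) (0:ℝ)
    have h3 : max (y - t₀ + 1) 0 ≤ max (x₀ - t₀ + 1) 0 + (y - x₀) := by
      apply max_le <;> linarith
    rw [slope_def_field, div_le_one hy']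
    linarith
  -- a ≥ 0
  have ha0 : 0 ≤ a := by
    have hs1 : Filter.Tendsto (slope (fun ξ => φ (ξ, t₀)) x₀)
        (nhdsWithin x₀ (Set.Iio x₀)) (nhds a) :=
      hslope.mono_left (nhdsWithin_mono x₀ (fun y hy => ne_of_lt hy))
    refine ge_of_tendsto hs1 ?_
    have hmem : ∀ᶠ y in nhdsWithin x₀ (Set.Iio x₀), y ∈ Set.Iio x₀ :=
      eventually_mem_nhdsWithin
    have hb : ∀ᶠ y in nhdsWithin x₀ (Set.Iio x₀),
        φ (y, t₀) - φ (x₀, t₀) ≤ max (y - t₀ + 1) 0 - max (x₀ - t₀ + 1) 0 :=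
      eventually_nhdsWithin_of_eventually_nhds hevx
    refine (hmem.and hb).mono fun y ⟨hy, hby⟩ => ?_
    have hy' : y - x₀ < 0 := by simp at hy; linarith
    have h1 := le_max_right (x₀ - t₀ + 1) (0:ℝ)
    have h3 : max (y - t₀ + 1) 0 ≤ max (x₀ - t₀ + 1) 0 := by
      apply max_le
      · exact le_trans (by linarith) (le_max_left _ _)
      · exact h1
    rw [slope_def_field, le_div_iff_of_neg hy']
    simp only [zero_mul]
    linarith
  rw [ht.deriv, hx.deriv, hF1 a ⟨ha0, ha1⟩]
  linarith
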